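/- Under the hypotheses of the generalized RHOSVD bound for a sum of Tucker tensors, if additionally ∑_{s=0}^S ‖B_s‖² ≤ C ‖Û‖² holds for some C > 0, then ‖Û − U⁰_(r)‖ ≤ √C ‖Û‖ ∑_{ℓ=1}^{3} (∑_{k=rₗ+1} σ_{ℓ,k}²)^{1/2}. -/

import Mathlib

open Finset Real


lemma L_ortho {α β : Type*} [Fintype β] [DecidableEq α] (s : Finset α) (f : α → β → ℝ) (c : α → ℝ)
    (h : ∀ t ∈ s, ∀ t' ∈ s, (∑ j, f t j * f t' j) = if t = t' then 1 else 0) :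
    (∑ j, (∑ t ∈ s, c t * f t j) ^ 2) = ∑ t ∈ s, c t ^ 2 := by
  have e1 : ∀ j : β, (∑ t ∈ s, c t * f t j) ^ 2
      = ∑ t ∈ s, ∑ t' ∈ s, (c t * c t') * (f t j * f t' j) := by
    intro j
    rw [sq, Finset.sum_mul_sum]
    exact Finset.sum_congr rfl fun t _ => Finset.sum_congr rfl fun t' _ => by ring
  calc (∑ j, (∑ t ∈ s, c t * f t j) ^ 2)
      = ∑ j, ∑ t ∈ s, ∑ t' ∈ s, (c t * c t') * (f t j * f t' j) :=
        Finset.sum_congr rfl fun j _ => e1 j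
    _ = ∑ t ∈ s, ∑ j, ∑ t' ∈ s, (c t * c t') * (f t j * f t' j) := Finset.sum_comm
    _ = ∑ t ∈ s, ∑ t' ∈ s, ∑ j, (c t * c t') * (f t j * f t' j) :=
        Finset.sum_congr rfl fun t _ => Finset.sum_comm
    _ = ∑ t ∈ s, ∑ t' ∈ s, (c t * c t') * ∑ j, f t j * f t' j :=
        Finset.sum_congr rfl fun t _ => Finset.sum_congr rfl fun t' _ => by
          rw [Finset.mul_sum]
    _ = ∑ t ∈ s, c t ^ 2 := by
        rw [Finset.sum_congr rfl fun t ht => Finset.sum_congr rfl fun t' ht' => by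
          rw [h t ht t' ht']]
        simp [Finset.sum_ite_eq', sq]

lemma L_bessel {α β : Type*} [Fintype β] [DecidableEq α] (s : Finset α) (f : α → β → ℝ)
    (h : ∀ t ∈ s, ∀ t' ∈ s, (∑ j, f t j * f t' j) = if t = t' then 1 else 0)
    (w : β → ℝ) :
    ∑ t ∈ s, (∑ j, f t j * w j) ^ 2 ≤ ∑ j, w j ^ 2 := by
  obtain ⟨a, ha⟩ : ∃ a : α → ℝ, ∀ t, a t = ∑ j, f t j * w j := ⟨_, fun _ => rfl⟩
  have key : 0 ≤ ∑ j, (w j - ∑ t ∈ s, a t * f t j) ^ 2 :=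
    Finset.sum_nonneg fun j _ => sq_nonneg _
  have expand : ∑ j, (w j - ∑ t ∈ s, a t * f t j) ^ 2
      = ∑ j, w j ^ 2 - 2 * ∑ j, (w j * ∑ t ∈ s, a t * f t j)
        + ∑ j, (∑ t ∈ s, a t * f t j) ^ 2 := by
    calc ∑ j, (w j - ∑ t ∈ s, a t * f t j) ^ 2
        = ∑ j, (w j ^ 2 - 2 * (w j * ∑ t ∈ s, a t * f t j) + (∑ t ∈ s, a t * f t j) ^ 2) :=
          Finset.sum_congr rfl fun j _ => by ring
      _ = ∑ j, (w j ^ 2 - 2 * (w j * ∑ t ∈ s, a t * f t j))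
            + ∑ j, (∑ t ∈ s, a t * f t j) ^ 2 := Finset.sum_add_distrib
      _ = ∑ j, w j ^ 2 - ∑ j, 2 * (w j * ∑ t ∈ s, a t * f t j)
            + ∑ j, (∑ t ∈ s, a t * f t j) ^ 2 := by rw [Finset.sum_sub_distrib]
      _ = _ := by rw [← Finset.mul_sum]
  have e2 : ∑ j, (w j * ∑ t ∈ s, a t * f t j) = ∑ t ∈ s, a t ^ 2 := by
    have h1 : ∀ j : β, w j * ∑ t ∈ s, a t * f t j = ∑ t ∈ s, a t * (f t j * w j) := by
      intro j; rw [Finset.mul_sum]; exact Finset.sum_congr rfl fun t _ => by ring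
    rw [Finset.sum_congr rfl fun j _ => h1 j, Finset.sum_comm]
    refine Finset.sum_congr rfl fun t _ => ?_
    rw [← Finset.mul_sum, sq, ha t]
  have e3 : ∑ j, (∑ t ∈ s, a t * f t j) ^ 2 = ∑ t ∈ s, a t ^ 2 := L_ortho s f a h
  have e4 : ∑ t ∈ s, (∑ j, f t j * w j) ^ 2 = ∑ t ∈ s, a t ^ 2 :=
    Finset.sum_congr rfl fun t _ => by rw [ha t]
  rw [e4]; linarith

lemma L_contract {α β : Type*} [Fintype β] [DecidableEq α] (s : Finset α) (f : α → β → ℝ)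
    (h : ∀ t ∈ s, ∀ t' ∈ s, (∑ j, f t j * f t' j) = if t = t' then 1 else 0)
    (w : β → ℝ) :
    ∑ j, (∑ j', (∑ t ∈ s, f t j * f t j') * w j') ^ 2 ≤ ∑ j, w j ^ 2 := by
  have e : ∀ j : β, ∑ j', (∑ t ∈ s, f t j * f t j') * w j'
      = ∑ t ∈ s, (∑ j', f t j' * w j') * f t j := by
    intro j
    have : ∀ j' : β, (∑ t ∈ s, f t j * f t j') * w j' = ∑ t ∈ s, (f t j' * w j') * f t j := by
      intro j'; rw [Finset.sum_mul]; exact Finset.sum_congr rfl fun t _ => by ring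
    rw [Finset.sum_congr rfl fun j' _ => this j', Finset.sum_comm]
    exact Finset.sum_congr rfl fun t _ => by rw [Finset.sum_mul]
  calc ∑ j, (∑ j', (∑ t ∈ s, f t j * f t j') * w j') ^ 2
      = ∑ j, (∑ t ∈ s, (∑ j', f t j' * w j') * f t j) ^ 2 :=
        Finset.sum_congr rfl fun j _ => by rw [e j]
    _ = ∑ t ∈ s, (∑ j', f t j' * w j') ^ 2 := L_ortho s f _ h
    _ ≤ ∑ j, w j ^ 2 := L_bessel s f h w

lemma L_tri {ι : Type*} [Fintype ι] (f g : ι → ℝ) :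
    Real.sqrt (∑ i, (f i + g i) ^ 2) ≤ Real.sqrt (∑ i, f i ^ 2) + Real.sqrt (∑ i, g i ^ 2) := by
  have norm_eq : ∀ x : EuclideanSpace ℝ ι, ‖x‖ = Real.sqrt (∑ i, x i ^ 2) := by
    intro x; rw [EuclideanSpace.norm_eq]
    congr 1; exact Finset.sum_congr rfl fun i _ => by rw [Real.norm_eq_abs, sq_abs]
  have := norm_add_le (E := EuclideanSpace ℝ ι) (WithLp.toLp 2 f) (WithLp.toLp 2 g)
  simpa [norm_eq, PiLp.add_apply] using this


lemma ite_sum_Ico {R rr : ℕ} (hrr : rr ≤ R) (F : ℕ → ℝ) :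
    ∑ t ∈ Finset.range R, (if t < rr then 0 else F t) = ∑ t ∈ Finset.Ico rr R, F t := by
  rw [Finset.range_eq_Ico, ← Finset.sum_Ico_consecutive _ (Nat.zero_le rr) hrr]
  have h1 : ∑ t ∈ Finset.Ico 0 rr, (if t < rr then (0:ℝ) else F t) = 0 :=
    Finset.sum_eq_zero fun t ht => by simp [(Finset.mem_Ico.1 ht).2]
  have h2 : ∑ t ∈ Finset.Ico rr R, (if t < rr then (0:ℝ) else F t) = ∑ t ∈ Finset.Ico rr R, F t :=
    Finset.sum_congr rfl fun t ht => by simp [Nat.not_lt.2 (Finset.mem_Ico.1 ht).1]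
  rw [h1, h2, zero_add]

lemma tail_bound {n R rr : ℕ} (hrr : rr ≤ R) {γ κ : Type*} [Fintype γ] [Fintype κ]
    (σ : ℕ → ℝ) (z : ℕ → Fin n → ℝ) (v : ℕ → γ → ℝ)
    (hz : ∀ t < R, ∀ t' < R, (∑ i, z t i * z t' i) = if t = t' then 1 else 0)
    (hv : ∀ t < R, (∑ c, v t c * v t c) = 1)
    (h : γ → Fin n → ℝ)
    (hsvd : ∀ cc i, h cc i = ∑ t ∈ Finset.range R, σ t * z t i * v t cc)
    (G : γ → κ → ℝ) (X : Fin n → κ → ℝ)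
    (hX : ∀ i c, X i c = ∑ cp, h cp i * G cp c)
    (P : Fin n → Fin n → ℝ)
    (hP : ∀ i i', P i i' = ∑ t ∈ Finset.range rr, z t i * z t i') :
    ∑ i, ∑ c, (X i c - ∑ i', P i i' * X i' c) ^ 2
      ≤ (∑ t ∈ Finset.Ico rr R, σ t ^ 2) * ∑ cp, ∑ c, G cp c ^ 2 := by
  have hIcoR : ∀ t ∈ Finset.Ico rr R, t < R := fun t ht => (Finset.mem_Ico.1 ht).2
  have hPz : ∀ t, t < R → ∀ i, (∑ i', P i i' * z t i') = if t < rr then z t i else 0 := by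
    intro t ht i
    calc ∑ i', P i i' * z t i'
        = ∑ i', ∑ t' ∈ Finset.range rr, (z t' i * z t' i') * z t i' :=
          Finset.sum_congr rfl fun i' _ => by rw [hP, Finset.sum_mul]
      _ = ∑ t' ∈ Finset.range rr, ∑ i', (z t' i * z t' i') * z t i' := Finset.sum_comm
      _ = ∑ t' ∈ Finset.range rr, z t' i * ∑ i', z t' i' * z t i' :=
          Finset.sum_congr rfl fun t' _ => by
            rw [Finset.mul_sum]; exact Finset.sum_congr rfl fun i' _ => by ring
      _ = ∑ t' ∈ Finset.range rr, z t' i * (if t' = t then 1 else 0) :=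
          Finset.sum_congr rfl fun t' ht' => by
            rw [hz t' (lt_of_lt_of_le (Finset.mem_range.1 ht') hrr) t ht]
      _ = if t < rr then z t i else 0 := by
          simp only [mul_ite, mul_one, mul_zero]
          rw [Finset.sum_ite_eq' (Finset.range rr) t (fun t' => z t' i)]
          simp [Finset.mem_range]
  have hkey : ∀ cc i, h cc i - ∑ i', P i i' * h cc i'
      = ∑ t ∈ Finset.Ico rr R, σ t * z t i * v t cc := by
    intro cc i
    have e1 : ∑ i', P i i' * h cc i'
        = ∑ t ∈ Finset.range R, (σ t * v t cc) * (if t < rr then z t i else 0) := by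
      calc ∑ i', P i i' * h cc i'
          = ∑ i', ∑ t ∈ Finset.range R, (σ t * v t cc) * (P i i' * z t i') := by
            refine Finset.sum_congr rfl fun i' _ => ?_
            rw [hsvd cc i', Finset.mul_sum]
            exact Finset.sum_congr rfl fun t _ => by ring
        _ = ∑ t ∈ Finset.range R, ∑ i', (σ t * v t cc) * (P i i' * z t i') := Finset.sum_comm
        _ = ∑ t ∈ Finset.range R, (σ t * v t cc) * ∑ i', P i i' * z t i' :=
            Finset.sum_congr rfl fun t _ => by rw [Finset.mul_sum]
        _ = ∑ t ∈ Finset.range R, (σ t * v t cc) * (if t < rr then z t i else 0) :=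
            Finset.sum_congr rfl fun t ht => by rw [hPz t (Finset.mem_range.1 ht) i]
    rw [hsvd cc i, e1, ← Finset.sum_sub_distrib,
      ← ite_sum_Ico hrr (fun t => σ t * z t i * v t cc)]
    exact Finset.sum_congr rfl fun t _ => by split_ifs <;> ring
  obtain ⟨W, hW⟩ : ∃ W : ℕ → κ → ℝ, ∀ t c, W t c = ∑ cp, v t cp * G cp c := ⟨_, fun _ _ => rfl⟩
  have hD : ∀ i c, X i c - ∑ i', P i i' * X i' c
      = ∑ t ∈ Finset.Ico rr R, (σ t * W t c) * z t i := by
    intro i c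
    have e2 : ∑ i', P i i' * X i' c = ∑ cp, (∑ i', P i i' * h cp i') * G cp c := by
      calc ∑ i', P i i' * X i' c
          = ∑ i', ∑ cp, (P i i' * h cp i') * G cp c := by
            refine Finset.sum_congr rfl fun i' _ => ?_
            rw [hX i' c, Finset.mul_sum]
            exact Finset.sum_congr rfl fun cp _ => by ring
        _ = ∑ cp, ∑ i', (P i i' * h cp i') * G cp c := Finset.sum_comm
        _ = ∑ cp, (∑ i', P i i' * h cp i') * G cp c :=
            Finset.sum_congr rfl fun cp _ => by rw [Finset.sum_mul]
    calc X i c - ∑ i', P i i' * X i' c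
        = ∑ cp, (h cp i - ∑ i', P i i' * h cp i') * G cp c := by
          rw [hX i c, e2, ← Finset.sum_sub_distrib]
          exact Finset.sum_congr rfl fun cp _ => by rw [sub_mul]
      _ = ∑ cp, ∑ t ∈ Finset.Ico rr R, (σ t * z t i * v t cp) * G cp c := by
          refine Finset.sum_congr rfl fun cp _ => ?_
          rw [hkey cp i, Finset.sum_mul]
      _ = ∑ t ∈ Finset.Ico rr R, ∑ cp, (σ t * z t i * v t cp) * G cp c := Finset.sum_comm
      _ = ∑ t ∈ Finset.Ico rr R, (σ t * W t c) * z t i := by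
          refine Finset.sum_congr rfl fun t _ => ?_
          rw [hW t c, Finset.mul_sum, Finset.sum_mul]
          exact Finset.sum_congr rfl fun cp _ => by ring
  have e3 : ∑ i, ∑ c, (X i c - ∑ i', P i i' * X i' c) ^ 2
      = ∑ t ∈ Finset.Ico rr R, σ t ^ 2 * ∑ c, W t c ^ 2 := by
    calc ∑ i, ∑ c, (X i c - ∑ i', P i i' * X i' c) ^ 2
        = ∑ c, ∑ i, (X i c - ∑ i', P i i' * X i' c) ^ 2 := Finset.sum_comm
      _ = ∑ c, ∑ i, (∑ t ∈ Finset.Ico rr R, (σ t * W t c) * z t i) ^ 2 :=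
          Finset.sum_congr rfl fun c _ => Finset.sum_congr rfl fun i _ => by rw [hD i c]
      _ = ∑ c, ∑ t ∈ Finset.Ico rr R, (σ t * W t c) ^ 2 :=
          Finset.sum_congr rfl fun c _ =>
            L_ortho _ z _ (fun t ht t' ht' => hz t (hIcoR t ht) t' (hIcoR t' ht'))
      _ = ∑ t ∈ Finset.Ico rr R, ∑ c, (σ t * W t c) ^ 2 := Finset.sum_comm
      _ = ∑ t ∈ Finset.Ico rr R, σ t ^ 2 * ∑ c, W t c ^ 2 :=
          Finset.sum_congr rfl fun t _ => by
            rw [Finset.mul_sum]; exact Finset.sum_congr rfl fun c _ => by ring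
  have e4 : ∀ t ∈ Finset.Ico rr R, ∑ c, W t c ^ 2 ≤ ∑ cp, ∑ c, G cp c ^ 2 := by
    intro t ht
    have hv1 : (∑ cp, v t cp ^ 2) = 1 := by
      rw [← hv t (hIcoR t ht)]; exact Finset.sum_congr rfl fun cp _ => by rw [pow_two]
    have h1 : ∀ c, W t c ^ 2 ≤ ∑ cp, G cp c ^ 2 := by
      intro c
      rw [hW t c]
      calc (∑ cp, v t cp * G cp c) ^ 2
          ≤ (∑ cp, v t cp ^ 2) * ∑ cp, G cp c ^ 2 :=
            Finset.sum_mul_sq_le_sq_mul_sq univ _ _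
        _ = ∑ cp, G cp c ^ 2 := by rw [hv1, one_mul]
    calc ∑ c, W t c ^ 2 ≤ ∑ c, ∑ cp, G cp c ^ 2 := Finset.sum_le_sum fun c _ => h1 c
      _ = ∑ cp, ∑ c, G cp c ^ 2 := Finset.sum_comm
  rw [e3]
  calc ∑ t ∈ Finset.Ico rr R, σ t ^ 2 * ∑ c, W t c ^ 2
      ≤ ∑ t ∈ Finset.Ico rr R, σ t ^ 2 * (∑ cp, ∑ c, G cp c ^ 2) :=
        Finset.sum_le_sum fun t ht => mul_le_mul_of_nonneg_left (e4 t ht) (sq_nonneg _)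
    _ = (∑ t ∈ Finset.Ico rr R, σ t ^ 2) * ∑ cp, ∑ c, G cp c ^ 2 := (Finset.sum_mul _ _ _).symm

lemma contract_bound {n rr R : ℕ} (hrr : rr ≤ R) {κ : Type*} [Fintype κ]
    (z : ℕ → Fin n → ℝ)
    (hz : ∀ t < R, ∀ t' < R, (∑ i, z t i * z t' i) = if t = t' then 1 else 0)
    (P : Fin n → Fin n → ℝ)
    (hP : ∀ i i', P i i' = ∑ t ∈ Finset.range rr, z t i * z t i')
    (X : Fin n → κ → ℝ) :
    ∑ i, ∑ c, (∑ i', P i i' * X i' c) ^ 2 ≤ ∑ i, ∑ c, X i c ^ 2 := by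
  have hz' : ∀ t ∈ Finset.range rr, ∀ t' ∈ Finset.range rr,
      (∑ i, z t i * z t' i) = if t = t' then 1 else 0 := fun t ht t' ht' =>
    hz t (lt_of_lt_of_le (Finset.mem_range.1 ht) hrr) t' (lt_of_lt_of_le (Finset.mem_range.1 ht') hrr)
  calc ∑ i, ∑ c, (∑ i', P i i' * X i' c) ^ 2
      = ∑ c, ∑ i, (∑ i', P i i' * X i' c) ^ 2 := Finset.sum_comm
    _ ≤ ∑ c, ∑ i, X i c ^ 2 := by
        refine Finset.sum_le_sum fun c _ => ?_
        have := L_contract (Finset.range rr) z hz' (fun i => X i c)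
        calc ∑ i, (∑ i', P i i' * X i' c) ^ 2
            = ∑ i, (∑ i', (∑ t ∈ Finset.range rr, z t i * z t i') * X i' c) ^ 2 :=
              Finset.sum_congr rfl fun i _ => by
                congr 1; exact Finset.sum_congr rfl fun i' _ => by rw [hP]
          _ ≤ ∑ i, X i c ^ 2 := this
    _ = ∑ i, ∑ c, X i c ^ 2 := Finset.sum_comm

lemma parseval_prod {n : ℕ} {α1 α2 : Type*} [Fintype α1] [Fintype α2] [DecidableEq α1] [DecidableEq α2]
    (a : α1 → Fin n → ℝ) (b : α2 → Fin n → ℝ)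
    (ha : ∀ m m', (∑ i, a m i * a m' i) = if m = m' then 1 else 0)
    (hb : ∀ m m', (∑ i, b m i * b m' i) = if m = m' then 1 else 0)
    (c : α1 → α2 → ℝ) :
    ∑ i, ∑ j, (∑ m1, ∑ m2, c m1 m2 * (a m1 i * b m2 j)) ^ 2 = ∑ m1, ∑ m2, c m1 m2 ^ 2 := by
  have horto : ∀ q ∈ (univ : Finset (α1 × α2)), ∀ q' ∈ (univ : Finset (α1 × α2)),
      (∑ p : Fin n × Fin n, (a q.1 p.1 * b q.2 p.2) * (a q'.1 p.1 * b q'.2 p.2))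
        = if q = q' then 1 else 0 := by
    intro q _ q' _
    calc ∑ p : Fin n × Fin n, (a q.1 p.1 * b q.2 p.2) * (a q'.1 p.1 * b q'.2 p.2)
        = ∑ i, ∑ j, (a q.1 i * a q'.1 i) * (b q.2 j * b q'.2 j) := by
          rw [Fintype.sum_prod_type]
          exact Finset.sum_congr rfl fun i _ => Finset.sum_congr rfl fun j _ => by ring
      _ = (∑ i, a q.1 i * a q'.1 i) * (∑ j, b q.2 j * b q'.2 j) := (Finset.sum_mul_sum _ _ _ _).symm
      _ = (if q.1 = q'.1 then 1 else 0) * (if q.2 = q'.2 then 1 else 0) := by rw [ha, hb]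
      _ = if q = q' then 1 else 0 := by
          by_cases h1 : q.1 = q'.1 <;> by_cases h2 : q.2 = q'.2 <;>
            simp [Prod.ext_iff, h1, h2]
  have key := L_ortho (univ : Finset (α1 × α2)) (fun q (p : Fin n × Fin n) => a q.1 p.1 * b q.2 p.2)
      (fun q => c q.1 q.2) horto
  calc ∑ i, ∑ j, (∑ m1, ∑ m2, c m1 m2 * (a m1 i * b m2 j)) ^ 2
      = ∑ p : Fin n × Fin n, (∑ q : α1 × α2, c q.1 q.2 * (a q.1 p.1 * b q.2 p.2)) ^ 2 := by
        rw [Fintype.sum_prod_type]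
        refine Finset.sum_congr rfl fun i _ => Finset.sum_congr rfl fun j _ => ?_
        congr 1
        rw [Fintype.sum_prod_type]
    _ = ∑ q : α1 × α2, c q.1 q.2 ^ 2 := key
    _ = ∑ m1, ∑ m2, c m1 m2 ^ 2 := Fintype.sum_prod_type _

theorem tucker_sum_to_tucker_relative_error_bound (n S : ℕ)
    (r : Fin (S + 1) → Fin 3 → ℕ) (rr : Fin 3 → ℕ)
    (u : (s : Fin (S + 1)) → (ℓ : Fin 3) → Fin (r s ℓ) → Fin n → ℝ)
    (B : (s : Fin (S + 1)) → Fin (r s 0) → Fin (r s 1) → Fin (r s 2) → ℝ)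
    (hu : ∀ s ℓ m m', ∑ i, u s ℓ m i * u s ℓ m' i = if m = m' then 1 else 0)
    (U : Fin (S + 1) → Fin n → Fin n → Fin n → ℝ)
    (hU : ∀ s i j k, U s i j k =
      ∑ m1, ∑ m2, ∑ m3, B s m1 m2 m3 * u s 0 m1 i * u s 1 m2 j * u s 2 m3 k)
    (Uhat : Fin n → Fin n → Fin n → ℝ)
    (hUhat : ∀ i j k, Uhat i j k = ∑ s, U s i j k)
    (Rtot : Fin 3 → ℕ) (hRtot : ∀ ℓ, Rtot ℓ = min n (∑ s, r s ℓ))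
    (σ : Fin 3 → ℕ → ℝ) (z : Fin 3 → ℕ → Fin n → ℝ)
    (v : (ℓ : Fin 3) → ℕ → (Σ s : Fin (S + 1), Fin (r s ℓ)) → ℝ)
    (hσnn : ∀ ℓ k, 0 ≤ σ ℓ k)
    (hσdec : ∀ ℓ k k', k ≤ k' → σ ℓ k' ≤ σ ℓ k)
    (hz : ∀ ℓ, ∀ k < Rtot ℓ, ∀ k' < Rtot ℓ,
      ∑ i, z ℓ k i * z ℓ k' i = if k = k' then 1 else 0)
    (hv : ∀ ℓ, ∀ k < Rtot ℓ, ∀ k' < Rtot ℓ,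
      ∑ c : (Σ s : Fin (S + 1), Fin (r s ℓ)), v ℓ k c * v ℓ k' c = if k = k' then 1 else 0)
    (hsvd : ∀ ℓ s m i, u s ℓ m i =
      ∑ t ∈ Finset.range (Rtot ℓ), σ ℓ t * z ℓ t i * v ℓ t ⟨s, m⟩)
    (hrr : ∀ ℓ, rr ℓ ≤ Rtot ℓ)
    (P : Fin 3 → Fin n → Fin n → ℝ)
    (hP : ∀ ℓ i i', P ℓ i i' = ∑ t ∈ Finset.range (rr ℓ), z ℓ t i * z ℓ t i')
    (U0 : Fin n → Fin n → Fin n → ℝ)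
    (hU0 : ∀ i j k, U0 i j k =
      ∑ i', ∑ j', ∑ k', P 0 i i' * P 1 j j' * P 2 k k' * Uhat i' j' k')
    (C : ℝ) (hC : 0 < C)
    (hstab : ∑ s, ∑ m1, ∑ m2, ∑ m3, (B s m1 m2 m3) ^ 2 ≤
      C * ∑ i, ∑ j, ∑ k, (Uhat i j k) ^ 2) :
    Real.sqrt (∑ i, ∑ j, ∑ k, (Uhat i j k - U0 i j k) ^ 2) ≤
      Real.sqrt C * Real.sqrt (∑ i, ∑ j, ∑ k, (Uhat i j k) ^ 2) *
        ∑ ℓ : Fin 3, Real.sqrt (∑ k ∈ Finset.Ico (rr ℓ) (Rtot ℓ), (σ ℓ k) ^ 2) := by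
  -- helper: product-sum conversion
  have convL : ∀ F : Fin n → Fin n → ℝ,
      (∑ c : Fin n × Fin n, F c.1 c.2) = ∑ a, ∑ b, F a b := fun F => Fintype.sum_prod_type _
  have sum3 : ∀ F : Fin n → Fin n → Fin n → ℝ,
      (∑ p : Fin n × Fin n × Fin n, F p.1 p.2.1 p.2.2) = ∑ i, ∑ j, ∑ k, F i j k := by
    intro F
    rw [Fintype.sum_prod_type]
    exact Finset.sum_congr rfl fun i _ => Fintype.sum_prod_type (fun q : Fin n × Fin n => F i q.1 q.2)
  have hsig : ∀ (ℓ : Fin 3) (F : (s : Fin (S + 1)) → Fin (r s ℓ) → ℝ),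
      (∑ cp : Σ s : Fin (S + 1), Fin (r s ℓ), F cp.1 cp.2) = ∑ s, ∑ m, F s m := by
    intro ℓ F
    rw [← Finset.univ_sigma_univ, Finset.sum_sigma]
  -- slice functions
  obtain ⟨g0, hg0⟩ : ∃ g0 : (s : Fin (S + 1)) → Fin (r s 0) → Fin n → Fin n → ℝ,
      ∀ s m1 j k, g0 s m1 j k = ∑ m2, ∑ m3, B s m1 m2 m3 * u s 1 m2 j * u s 2 m3 k :=
    ⟨_, fun _ _ _ _ => rfl⟩
  obtain ⟨g1, hg1⟩ : ∃ g1 : (s : Fin (S + 1)) → Fin (r s 1) → Fin n → Fin n → ℝ,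
      ∀ s m2 i k, g1 s m2 i k = ∑ m1, ∑ m3, B s m1 m2 m3 * u s 0 m1 i * u s 2 m3 k :=
    ⟨_, fun _ _ _ _ => rfl⟩
  obtain ⟨g2, hg2⟩ : ∃ g2 : (s : Fin (S + 1)) → Fin (r s 2) → Fin n → Fin n → ℝ,
      ∀ s m3 i j, g2 s m3 i j = ∑ m1, ∑ m2, B s m1 m2 m3 * u s 0 m1 i * u s 1 m2 j :=
    ⟨_, fun _ _ _ _ => rfl⟩
  have hU0g : ∀ s i j k, U s i j k = ∑ m1, u s 0 m1 i * g0 s m1 j k := by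
    intro s i j k
    rw [hU s i j k]
    refine Finset.sum_congr rfl fun m1 _ => ?_
    rw [hg0 s m1 j k, Finset.mul_sum]
    refine Finset.sum_congr rfl fun m2 _ => ?_
    rw [Finset.mul_sum]
    exact Finset.sum_congr rfl fun m3 _ => by ring
  have hU1g : ∀ s i j k, U s i j k = ∑ m2, u s 1 m2 j * g1 s m2 i k := by
    intro s i j k
    rw [hU s i j k, Finset.sum_comm]
    refine Finset.sum_congr rfl fun m2 _ => ?_
    rw [hg1 s m2 i k, Finset.mul_sum]
    refine Finset.sum_congr rfl fun m1 _ => ?_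
    rw [Finset.mul_sum]
    exact Finset.sum_congr rfl fun m3 _ => by ring
  have hU2g : ∀ s i j k, U s i j k = ∑ m3, u s 2 m3 k * g2 s m3 i j := by
    intro s i j k
    calc U s i j k
        = ∑ m1, ∑ m2, ∑ m3, B s m1 m2 m3 * u s 0 m1 i * u s 1 m2 j * u s 2 m3 k := hU s i j k
      _ = ∑ m1, ∑ m3, ∑ m2, B s m1 m2 m3 * u s 0 m1 i * u s 1 m2 j * u s 2 m3 k :=
          Finset.sum_congr rfl fun m1 _ => Finset.sum_comm
      _ = ∑ m3, ∑ m1, ∑ m2, B s m1 m2 m3 * u s 0 m1 i * u s 1 m2 j * u s 2 m3 k :=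
          Finset.sum_comm
      _ = ∑ m3, u s 2 m3 k * g2 s m3 i j := by
          refine Finset.sum_congr rfl fun m3 _ => ?_
          rw [hg2 s m3 i j, Finset.mul_sum]
          refine Finset.sum_congr rfl fun m1 _ => ?_
          rw [Finset.mul_sum]
          exact Finset.sum_congr rfl fun m2 _ => by ring
  -- Parseval for slices
  have hg0sq : ∀ s m1, (∑ j, ∑ k, g0 s m1 j k ^ 2) = ∑ m2, ∑ m3, B s m1 m2 m3 ^ 2 := by
    intro s m1
    calc ∑ j, ∑ k, g0 s m1 j k ^ 2
        = ∑ j, ∑ k, (∑ m2, ∑ m3, B s m1 m2 m3 * (u s 1 m2 j * u s 2 m3 k)) ^ 2 := by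
          refine Finset.sum_congr rfl fun j _ => Finset.sum_congr rfl fun k _ => ?_
          rw [hg0 s m1 j k]
          congr 1
          exact Finset.sum_congr rfl fun m2 _ => Finset.sum_congr rfl fun m3 _ => by ring
      _ = _ := parseval_prod (u s 1) (u s 2) (hu s 1) (hu s 2) (fun m2 m3 => B s m1 m2 m3)
  have hg1sq : ∀ s m2, (∑ i, ∑ k, g1 s m2 i k ^ 2) = ∑ m1, ∑ m3, B s m1 m2 m3 ^ 2 := by
    intro s m2
    calc ∑ i, ∑ k, g1 s m2 i k ^ 2
        = ∑ i, ∑ k, (∑ m1, ∑ m3, B s m1 m2 m3 * (u s 0 m1 i * u s 2 m3 k)) ^ 2 := by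
          refine Finset.sum_congr rfl fun i _ => Finset.sum_congr rfl fun k _ => ?_
          rw [hg1 s m2 i k]
          congr 1
          exact Finset.sum_congr rfl fun m1 _ => Finset.sum_congr rfl fun m3 _ => by ring
      _ = _ := parseval_prod (u s 0) (u s 2) (hu s 0) (hu s 2) (fun m1 m3 => B s m1 m2 m3)
  have hg2sq : ∀ s m3, (∑ i, ∑ j, g2 s m3 i j ^ 2) = ∑ m1, ∑ m2, B s m1 m2 m3 ^ 2 := by
    intro s m3
    calc ∑ i, ∑ j, g2 s m3 i j ^ 2
        = ∑ i, ∑ j, (∑ m1, ∑ m2, B s m1 m2 m3 * (u s 0 m1 i * u s 1 m2 j)) ^ 2 := by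
          refine Finset.sum_congr rfl fun i _ => Finset.sum_congr rfl fun j _ => ?_
          rw [hg2 s m3 i j]
          congr 1
          exact Finset.sum_congr rfl fun m1 _ => Finset.sum_congr rfl fun m2 _ => by ring
      _ = _ := parseval_prod (u s 0) (u s 1) (hu s 0) (hu s 1) (fun m1 m2 => B s m1 m2 m3)
  -- mode-0 tail bound
  have hXs0 : ∀ (i : Fin n) (c : Fin n × Fin n), Uhat i c.1 c.2
      = ∑ cp : Σ s : Fin (S + 1), Fin (r s 0), u cp.1 0 cp.2 i * g0 cp.1 cp.2 c.1 c.2 := by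
    intro i c
    calc Uhat i c.1 c.2 = ∑ s, U s i c.1 c.2 := hUhat i c.1 c.2
      _ = ∑ s, ∑ m1, u s 0 m1 i * g0 s m1 c.1 c.2 :=
          Finset.sum_congr rfl fun s _ => hU0g s i c.1 c.2
      _ = _ := (hsig 0 (fun s m => u s 0 m i * g0 s m c.1 c.2)).symm
  have tb0 := tail_bound (hrr 0) (σ 0) (z 0) (v 0) (hz 0)
      (fun t ht => by simpa using hv 0 t ht t ht)
      (fun cp i => u cp.1 0 cp.2 i)
      (fun cp i => hsvd 0 cp.1 cp.2 i)
      (fun cp (c : Fin n × Fin n) => g0 cp.1 cp.2 c.1 c.2)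
      (fun i (c : Fin n × Fin n) => Uhat i c.1 c.2)
      hXs0 (P 0) (hP 0)
  have T0 : (∑ i, ∑ j, ∑ k, (Uhat i j k - ∑ i', P 0 i i' * Uhat i' j k) ^ 2)
      ≤ (∑ t ∈ Finset.Ico (rr 0) (Rtot 0), σ 0 t ^ 2)
        * ∑ s, ∑ m1, ∑ m2, ∑ m3, B s m1 m2 m3 ^ 2 := by
    calc ∑ i, ∑ j, ∑ k, (Uhat i j k - ∑ i', P 0 i i' * Uhat i' j k) ^ 2
        = ∑ i, ∑ c : Fin n × Fin n, (Uhat i c.1 c.2 - ∑ i', P 0 i i' * Uhat i' c.1 c.2) ^ 2 :=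
          Finset.sum_congr rfl fun i _ =>
            (convL (fun j k => (Uhat i j k - ∑ i', P 0 i i' * Uhat i' j k) ^ 2)).symm
      _ ≤ (∑ t ∈ Finset.Ico (rr 0) (Rtot 0), σ 0 t ^ 2)
            * ∑ cp : Σ s : Fin (S + 1), Fin (r s 0), ∑ c : Fin n × Fin n,
                g0 cp.1 cp.2 c.1 c.2 ^ 2 := tb0
      _ = _ := by
          congr 1
          calc ∑ cp : Σ s : Fin (S + 1), Fin (r s 0), ∑ c : Fin n × Fin n, g0 cp.1 cp.2 c.1 c.2 ^ 2
              = ∑ cp : Σ s : Fin (S + 1), Fin (r s 0), ∑ j, ∑ k, g0 cp.1 cp.2 j k ^ 2 :=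
                Finset.sum_congr rfl fun cp _ => convL (fun j k => g0 cp.1 cp.2 j k ^ 2)
            _ = ∑ s, ∑ m1, ∑ j, ∑ k, g0 s m1 j k ^ 2 :=
                hsig 0 (fun s m => ∑ j, ∑ k, g0 s m j k ^ 2)
            _ = ∑ s, ∑ m1, ∑ m2, ∑ m3, B s m1 m2 m3 ^ 2 :=
                Finset.sum_congr rfl fun s _ => Finset.sum_congr rfl fun m1 _ => hg0sq s m1
  -- mode-1 tail bound
  have hXs1 : ∀ (j : Fin n) (c : Fin n × Fin n), Uhat c.1 j c.2
      = ∑ cp : Σ s : Fin (S + 1), Fin (r s 1), u cp.1 1 cp.2 j * g1 cp.1 cp.2 c.1 c.2 := by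
    intro j c
    calc Uhat c.1 j c.2 = ∑ s, U s c.1 j c.2 := hUhat c.1 j c.2
      _ = ∑ s, ∑ m2, u s 1 m2 j * g1 s m2 c.1 c.2 :=
          Finset.sum_congr rfl fun s _ => hU1g s c.1 j c.2
      _ = _ := (hsig 1 (fun s m => u s 1 m j * g1 s m c.1 c.2)).symm
  have tb1 := tail_bound (hrr 1) (σ 1) (z 1) (v 1) (hz 1)
      (fun t ht => by simpa using hv 1 t ht t ht)
      (fun cp j => u cp.1 1 cp.2 j)
      (fun cp j => hsvd 1 cp.1 cp.2 j)
      (fun cp (c : Fin n × Fin n) => g1 cp.1 cp.2 c.1 c.2)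
      (fun j (c : Fin n × Fin n) => Uhat c.1 j c.2)
      hXs1 (P 1) (hP 1)
  have T1 : (∑ i, ∑ j, ∑ k, (Uhat i j k - ∑ j', P 1 j j' * Uhat i j' k) ^ 2)
      ≤ (∑ t ∈ Finset.Ico (rr 1) (Rtot 1), σ 1 t ^ 2)
        * ∑ s, ∑ m1, ∑ m2, ∑ m3, B s m1 m2 m3 ^ 2 := by
    calc ∑ i, ∑ j, ∑ k, (Uhat i j k - ∑ j', P 1 j j' * Uhat i j' k) ^ 2
        = ∑ j, ∑ i, ∑ k, (Uhat i j k - ∑ j', P 1 j j' * Uhat i j' k) ^ 2 := Finset.sum_comm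
      _ = ∑ j, ∑ c : Fin n × Fin n, (Uhat c.1 j c.2 - ∑ j', P 1 j j' * Uhat c.1 j' c.2) ^ 2 :=
          Finset.sum_congr rfl fun j _ =>
            (convL (fun i k => (Uhat i j k - ∑ j', P 1 j j' * Uhat i j' k) ^ 2)).symm
      _ ≤ (∑ t ∈ Finset.Ico (rr 1) (Rtot 1), σ 1 t ^ 2)
            * ∑ cp : Σ s : Fin (S + 1), Fin (r s 1), ∑ c : Fin n × Fin n,
                g1 cp.1 cp.2 c.1 c.2 ^ 2 := tb1
      _ = _ := by
          congr 1
          calc ∑ cp : Σ s : Fin (S + 1), Fin (r s 1), ∑ c : Fin n × Fin n, g1 cp.1 cp.2 c.1 c.2 ^ 2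
              = ∑ cp : Σ s : Fin (S + 1), Fin (r s 1), ∑ i, ∑ k, g1 cp.1 cp.2 i k ^ 2 :=
                Finset.sum_congr rfl fun cp _ => convL (fun i k => g1 cp.1 cp.2 i k ^ 2)
            _ = ∑ s, ∑ m2, ∑ i, ∑ k, g1 s m2 i k ^ 2 :=
                hsig 1 (fun s m => ∑ i, ∑ k, g1 s m i k ^ 2)
            _ = ∑ s, ∑ m2, ∑ m1, ∑ m3, B s m1 m2 m3 ^ 2 :=
                Finset.sum_congr rfl fun s _ => Finset.sum_congr rfl fun m2 _ => hg1sq s m2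
            _ = ∑ s, ∑ m1, ∑ m2, ∑ m3, B s m1 m2 m3 ^ 2 :=
                Finset.sum_congr rfl fun s _ => Finset.sum_comm
  -- mode-2 tail bound
  have hXs2 : ∀ (k : Fin n) (c : Fin n × Fin n), Uhat c.1 c.2 k
      = ∑ cp : Σ s : Fin (S + 1), Fin (r s 2), u cp.1 2 cp.2 k * g2 cp.1 cp.2 c.1 c.2 := by
    intro k c
    calc Uhat c.1 c.2 k = ∑ s, U s c.1 c.2 k := hUhat c.1 c.2 k
      _ = ∑ s, ∑ m3, u s 2 m3 k * g2 s m3 c.1 c.2 :=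
          Finset.sum_congr rfl fun s _ => hU2g s c.1 c.2 k
      _ = _ := (hsig 2 (fun s m => u s 2 m k * g2 s m c.1 c.2)).symm
  have tb2 := tail_bound (hrr 2) (σ 2) (z 2) (v 2) (hz 2)
      (fun t ht => by simpa using hv 2 t ht t ht)
      (fun cp k => u cp.1 2 cp.2 k)
      (fun cp k => hsvd 2 cp.1 cp.2 k)
      (fun cp (c : Fin n × Fin n) => g2 cp.1 cp.2 c.1 c.2)
      (fun k (c : Fin n × Fin n) => Uhat c.1 c.2 k)
      hXs2 (P 2) (hP 2)
  have T2 : (∑ i, ∑ j, ∑ k, (Uhat i j k - ∑ k', P 2 k k' * Uhat i j k') ^ 2)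
      ≤ (∑ t ∈ Finset.Ico (rr 2) (Rtot 2), σ 2 t ^ 2)
        * ∑ s, ∑ m1, ∑ m2, ∑ m3, B s m1 m2 m3 ^ 2 := by
    calc ∑ i, ∑ j, ∑ k, (Uhat i j k - ∑ k', P 2 k k' * Uhat i j k') ^ 2
        = ∑ i, ∑ k, ∑ j, (Uhat i j k - ∑ k', P 2 k k' * Uhat i j k') ^ 2 :=
          Finset.sum_congr rfl fun i _ => Finset.sum_comm
      _ = ∑ k, ∑ i, ∑ j, (Uhat i j k - ∑ k', P 2 k k' * Uhat i j k') ^ 2 := Finset.sum_comm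
      _ = ∑ k, ∑ c : Fin n × Fin n, (Uhat c.1 c.2 k - ∑ k', P 2 k k' * Uhat c.1 c.2 k') ^ 2 :=
          Finset.sum_congr rfl fun k _ =>
            (convL (fun i j => (Uhat i j k - ∑ k', P 2 k k' * Uhat i j k') ^ 2)).symm
      _ ≤ (∑ t ∈ Finset.Ico (rr 2) (Rtot 2), σ 2 t ^ 2)
            * ∑ cp : Σ s : Fin (S + 1), Fin (r s 2), ∑ c : Fin n × Fin n,
                g2 cp.1 cp.2 c.1 c.2 ^ 2 := tb2
      _ = _ := by
          congr 1
          calc ∑ cp : Σ s : Fin (S + 1), Fin (r s 2), ∑ c : Fin n × Fin n, g2 cp.1 cp.2 c.1 c.2 ^ 2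
              = ∑ cp : Σ s : Fin (S + 1), Fin (r s 2), ∑ i, ∑ j, g2 cp.1 cp.2 i j ^ 2 :=
                Finset.sum_congr rfl fun cp _ => convL (fun i j => g2 cp.1 cp.2 i j ^ 2)
            _ = ∑ s, ∑ m3, ∑ i, ∑ j, g2 s m3 i j ^ 2 :=
                hsig 2 (fun s m => ∑ i, ∑ j, g2 s m i j ^ 2)
            _ = ∑ s, ∑ m3, ∑ m1, ∑ m2, B s m1 m2 m3 ^ 2 :=
                Finset.sum_congr rfl fun s _ => Finset.sum_congr rfl fun m3 _ => hg2sq s m3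
            _ = ∑ s, ∑ m1, ∑ m3, ∑ m2, B s m1 m2 m3 ^ 2 :=
                Finset.sum_congr rfl fun s _ => Finset.sum_comm
            _ = ∑ s, ∑ m1, ∑ m2, ∑ m3, B s m1 m2 m3 ^ 2 :=
                Finset.sum_congr rfl fun s _ => Finset.sum_congr rfl fun m1 _ => Finset.sum_comm
  -- contraction bounds
  have K0 : ∀ X : Fin n → Fin n → Fin n → ℝ,
      (∑ i, ∑ j, ∑ k, (∑ i', P 0 i i' * X i' j k) ^ 2) ≤ ∑ i, ∑ j, ∑ k, X i j k ^ 2 := by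
    intro X
    have cb := contract_bound (hrr 0) (z 0) (hz 0) (P 0) (hP 0) (fun i (c : Fin n × Fin n) => X i c.1 c.2)
    calc ∑ i, ∑ j, ∑ k, (∑ i', P 0 i i' * X i' j k) ^ 2
        = ∑ i, ∑ c : Fin n × Fin n, (∑ i', P 0 i i' * X i' c.1 c.2) ^ 2 :=
          Finset.sum_congr rfl fun i _ =>
            (convL (fun j k => (∑ i', P 0 i i' * X i' j k) ^ 2)).symm
      _ ≤ ∑ i, ∑ c : Fin n × Fin n, X i c.1 c.2 ^ 2 := cb
      _ = ∑ i, ∑ j, ∑ k, X i j k ^ 2 :=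
          Finset.sum_congr rfl fun i _ => convL (fun j k => X i j k ^ 2)
  have K1 : ∀ X : Fin n → Fin n → Fin n → ℝ,
      (∑ i, ∑ j, ∑ k, (∑ j', P 1 j j' * X i j' k) ^ 2) ≤ ∑ i, ∑ j, ∑ k, X i j k ^ 2 := by
    intro X
    have cb := contract_bound (hrr 1) (z 1) (hz 1) (P 1) (hP 1) (fun j (c : Fin n × Fin n) => X c.1 j c.2)
    calc ∑ i, ∑ j, ∑ k, (∑ j', P 1 j j' * X i j' k) ^ 2
        = ∑ j, ∑ i, ∑ k, (∑ j', P 1 j j' * X i j' k) ^ 2 := Finset.sum_comm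
      _ = ∑ j, ∑ c : Fin n × Fin n, (∑ j', P 1 j j' * X c.1 j' c.2) ^ 2 :=
          Finset.sum_congr rfl fun j _ =>
            (convL (fun i k => (∑ j', P 1 j j' * X i j' k) ^ 2)).symm
      _ ≤ ∑ j, ∑ c : Fin n × Fin n, X c.1 j c.2 ^ 2 := cb
      _ = ∑ j, ∑ i, ∑ k, X i j k ^ 2 :=
          Finset.sum_congr rfl fun j _ => convL (fun i k => X i j k ^ 2)
      _ = ∑ i, ∑ j, ∑ k, X i j k ^ 2 := Finset.sum_comm
  -- projected tensors
  obtain ⟨F2, hF2⟩ : ∃ F2 : Fin n → Fin n → Fin n → ℝ,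
      ∀ i j k, F2 i j k = ∑ k', P 2 k k' * Uhat i j k' := ⟨_, fun _ _ _ => rfl⟩
  obtain ⟨F1, hF1⟩ : ∃ F1 : Fin n → Fin n → Fin n → ℝ,
      ∀ i j k, F1 i j k = ∑ j', P 1 j j' * Uhat i j' k := ⟨_, fun _ _ _ => rfl⟩
  obtain ⟨H, hH⟩ : ∃ H : Fin n → Fin n → Fin n → ℝ,
      ∀ i j k, H i j k = ∑ j', P 1 j j' * F2 i j' k := ⟨_, fun _ _ _ => rfl⟩
  obtain ⟨E1, hE1⟩ : ∃ E1 : Fin n → Fin n → Fin n → ℝ,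
      ∀ i j k, E1 i j k = ∑ i', P 0 i i' * Uhat i' j k := ⟨_, fun _ _ _ => rfl⟩
  obtain ⟨E2, hE2⟩ : ∃ E2 : Fin n → Fin n → Fin n → ℝ,
      ∀ i j k, E2 i j k = ∑ i', P 0 i i' * F1 i' j k := ⟨_, fun _ _ _ => rfl⟩
  obtain ⟨E3, hE3⟩ : ∃ E3 : Fin n → Fin n → Fin n → ℝ,
      ∀ i j k, E3 i j k = ∑ i', P 0 i i' * H i' j k := ⟨_, fun _ _ _ => rfl⟩
  have hE3U0 : ∀ i j k, E3 i j k = U0 i j k := by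
    intro i j k
    rw [hE3, hU0]
    simp only [hH, hF2, Finset.mul_sum]
    exact Finset.sum_congr rfl fun i' _ => Finset.sum_congr rfl fun j' _ =>
      Finset.sum_congr rfl fun k' _ => by ring
  have split : ∀ i j k, Uhat i j k - U0 i j k
      = (Uhat i j k - E1 i j k) + ((E1 i j k - E2 i j k) + (E2 i j k - E3 i j k)) := by
    intro i j k
    rw [← hE3U0 i j k]
    ring
  -- bounds for the three pieces
  have b0 : (∑ i, ∑ j, ∑ k, (Uhat i j k - E1 i j k) ^ 2)
      ≤ (∑ t ∈ Finset.Ico (rr 0) (Rtot 0), σ 0 t ^ 2)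
        * ∑ s, ∑ m1, ∑ m2, ∑ m3, B s m1 m2 m3 ^ 2 := by
    calc ∑ i, ∑ j, ∑ k, (Uhat i j k - E1 i j k) ^ 2
        = ∑ i, ∑ j, ∑ k, (Uhat i j k - ∑ i', P 0 i i' * Uhat i' j k) ^ 2 :=
          Finset.sum_congr rfl fun i _ => Finset.sum_congr rfl fun j _ =>
            Finset.sum_congr rfl fun k _ => by rw [hE1]
      _ ≤ _ := T0
  have pt1 : ∀ i j k, E1 i j k - E2 i j k = ∑ i', P 0 i i' * (Uhat i' j k - F1 i' j k) := by
    intro i j k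
    rw [hE1, hE2, ← Finset.sum_sub_distrib]
    exact Finset.sum_congr rfl fun i' _ => (mul_sub _ _ _).symm
  have b1 : (∑ i, ∑ j, ∑ k, (E1 i j k - E2 i j k) ^ 2)
      ≤ (∑ t ∈ Finset.Ico (rr 1) (Rtot 1), σ 1 t ^ 2)
        * ∑ s, ∑ m1, ∑ m2, ∑ m3, B s m1 m2 m3 ^ 2 := by
    calc ∑ i, ∑ j, ∑ k, (E1 i j k - E2 i j k) ^ 2
        = ∑ i, ∑ j, ∑ k, (∑ i', P 0 i i' * (Uhat i' j k - F1 i' j k)) ^ 2 :=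
          Finset.sum_congr rfl fun i _ => Finset.sum_congr rfl fun j _ =>
            Finset.sum_congr rfl fun k _ => by rw [pt1]
      _ ≤ ∑ i, ∑ j, ∑ k, (Uhat i j k - F1 i j k) ^ 2 :=
          K0 (fun i j k => Uhat i j k - F1 i j k)
      _ = ∑ i, ∑ j, ∑ k, (Uhat i j k - ∑ j', P 1 j j' * Uhat i j' k) ^ 2 :=
          Finset.sum_congr rfl fun i _ => Finset.sum_congr rfl fun j _ =>
            Finset.sum_congr rfl fun k _ => by rw [hF1]
      _ ≤ _ := T1
  have pt2 : ∀ i j k, E2 i j k - E3 i j k = ∑ i', P 0 i i' * (F1 i' j k - H i' j k) := by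
    intro i j k
    rw [hE2, hE3, ← Finset.sum_sub_distrib]
    exact Finset.sum_congr rfl fun i' _ => (mul_sub _ _ _).symm
  have pt3 : ∀ i j k, F1 i j k - H i j k = ∑ j', P 1 j j' * (Uhat i j' k - F2 i j' k) := by
    intro i j k
    rw [hF1, hH, ← Finset.sum_sub_distrib]
    exact Finset.sum_congr rfl fun j' _ => (mul_sub _ _ _).symm
  have b2 : (∑ i, ∑ j, ∑ k, (E2 i j k - E3 i j k) ^ 2)
      ≤ (∑ t ∈ Finset.Ico (rr 2) (Rtot 2), σ 2 t ^ 2)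
        * ∑ s, ∑ m1, ∑ m2, ∑ m3, B s m1 m2 m3 ^ 2 := by
    calc ∑ i, ∑ j, ∑ k, (E2 i j k - E3 i j k) ^ 2
        = ∑ i, ∑ j, ∑ k, (∑ i', P 0 i i' * (F1 i' j k - H i' j k)) ^ 2 :=
          Finset.sum_congr rfl fun i _ => Finset.sum_congr rfl fun j _ =>
            Finset.sum_congr rfl fun k _ => by rw [pt2]
      _ ≤ ∑ i, ∑ j, ∑ k, (F1 i j k - H i j k) ^ 2 :=
          K0 (fun i j k => F1 i j k - H i j k)
      _ = ∑ i, ∑ j, ∑ k, (∑ j', P 1 j j' * (Uhat i j' k - F2 i j' k)) ^ 2 :=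
          Finset.sum_congr rfl fun i _ => Finset.sum_congr rfl fun j _ =>
            Finset.sum_congr rfl fun k _ => by rw [pt3]
      _ ≤ ∑ i, ∑ j, ∑ k, (Uhat i j k - F2 i j k) ^ 2 :=
          K1 (fun i j k => Uhat i j k - F2 i j k)
      _ = ∑ i, ∑ j, ∑ k, (Uhat i j k - ∑ k', P 2 k k' * Uhat i j k') ^ 2 :=
          Finset.sum_congr rfl fun i _ => Finset.sum_congr rfl fun j _ =>
            Finset.sum_congr rfl fun k _ => by rw [hF2]
      _ ≤ _ := T2
  -- triangle inequality
  have eqL : (∑ i, ∑ j, ∑ k, (Uhat i j k - U0 i j k) ^ 2)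
      = ∑ p : Fin n × Fin n × Fin n,
          ((Uhat p.1 p.2.1 p.2.2 - E1 p.1 p.2.1 p.2.2)
            + ((E1 p.1 p.2.1 p.2.2 - E2 p.1 p.2.1 p.2.2)
              + (E2 p.1 p.2.1 p.2.2 - E3 p.1 p.2.1 p.2.2))) ^ 2 := by
    rw [← sum3 (fun i j k => (Uhat i j k - U0 i j k) ^ 2)]
    exact Finset.sum_congr rfl fun p _ => by rw [split p.1 p.2.1 p.2.2]
  have t1 := L_tri (ι := Fin n × Fin n × Fin n)
      (fun p => Uhat p.1 p.2.1 p.2.2 - E1 p.1 p.2.1 p.2.2)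
      (fun p => (E1 p.1 p.2.1 p.2.2 - E2 p.1 p.2.1 p.2.2)
        + (E2 p.1 p.2.1 p.2.2 - E3 p.1 p.2.1 p.2.2))
  have t2 := L_tri (ι := Fin n × Fin n × Fin n)
      (fun p => E1 p.1 p.2.1 p.2.2 - E2 p.1 p.2.1 p.2.2)
      (fun p => E2 p.1 p.2.1 p.2.2 - E3 p.1 p.2.1 p.2.2)
  have tri : Real.sqrt (∑ i, ∑ j, ∑ k, (Uhat i j k - U0 i j k) ^ 2)
      ≤ Real.sqrt (∑ i, ∑ j, ∑ k, (Uhat i j k - E1 i j k) ^ 2)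
        + (Real.sqrt (∑ i, ∑ j, ∑ k, (E1 i j k - E2 i j k) ^ 2)
          + Real.sqrt (∑ i, ∑ j, ∑ k, (E2 i j k - E3 i j k) ^ 2)) := by
    calc Real.sqrt (∑ i, ∑ j, ∑ k, (Uhat i j k - U0 i j k) ^ 2)
        = Real.sqrt (∑ p : Fin n × Fin n × Fin n,
            ((Uhat p.1 p.2.1 p.2.2 - E1 p.1 p.2.1 p.2.2)
              + ((E1 p.1 p.2.1 p.2.2 - E2 p.1 p.2.1 p.2.2)
                + (E2 p.1 p.2.1 p.2.2 - E3 p.1 p.2.1 p.2.2))) ^ 2) := by rw [eqL]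
      _ ≤ Real.sqrt (∑ p : Fin n × Fin n × Fin n,
              (Uhat p.1 p.2.1 p.2.2 - E1 p.1 p.2.1 p.2.2) ^ 2)
            + Real.sqrt (∑ p : Fin n × Fin n × Fin n,
              ((E1 p.1 p.2.1 p.2.2 - E2 p.1 p.2.1 p.2.2)
                + (E2 p.1 p.2.1 p.2.2 - E3 p.1 p.2.1 p.2.2)) ^ 2) := t1
      _ ≤ Real.sqrt (∑ p : Fin n × Fin n × Fin n,
              (Uhat p.1 p.2.1 p.2.2 - E1 p.1 p.2.1 p.2.2) ^ 2)
            + (Real.sqrt (∑ p : Fin n × Fin n × Fin n,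
                (E1 p.1 p.2.1 p.2.2 - E2 p.1 p.2.1 p.2.2) ^ 2)
              + Real.sqrt (∑ p : Fin n × Fin n × Fin n,
                (E2 p.1 p.2.1 p.2.2 - E3 p.1 p.2.1 p.2.2) ^ 2)) := by
            exact add_le_add le_rfl t2
      _ = _ := by
            rw [sum3 (fun i j k => (Uhat i j k - E1 i j k) ^ 2),
              sum3 (fun i j k => (E1 i j k - E2 i j k) ^ 2),
              sum3 (fun i j k => (E2 i j k - E3 i j k) ^ 2)]
  -- final assembly
  have hBSle : Real.sqrt (∑ s, ∑ m1, ∑ m2, ∑ m3, B s m1 m2 m3 ^ 2)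
      ≤ Real.sqrt C * Real.sqrt (∑ i, ∑ j, ∑ k, Uhat i j k ^ 2) := by
    rw [← Real.sqrt_mul hC.le]
    exact Real.sqrt_le_sqrt hstab
  have htn : ∀ ℓ : Fin 3, (0 : ℝ) ≤ ∑ t ∈ Finset.Ico (rr ℓ) (Rtot ℓ), σ ℓ t ^ 2 :=
    fun ℓ => Finset.sum_nonneg fun _ _ => sq_nonneg _
  have hM : (0 : ℝ) ≤ Real.sqrt C * Real.sqrt (∑ i, ∑ j, ∑ k, Uhat i j k ^ 2) :=
    mul_nonneg (Real.sqrt_nonneg _) (Real.sqrt_nonneg _)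
  have piece : ∀ (ℓ : Fin 3) (Y : ℝ),
      Y ≤ (∑ t ∈ Finset.Ico (rr ℓ) (Rtot ℓ), σ ℓ t ^ 2)
            * ∑ s, ∑ m1, ∑ m2, ∑ m3, B s m1 m2 m3 ^ 2 →
      Real.sqrt Y ≤ Real.sqrt (∑ t ∈ Finset.Ico (rr ℓ) (Rtot ℓ), σ ℓ t ^ 2)
        * (Real.sqrt C * Real.sqrt (∑ i, ∑ j, ∑ k, Uhat i j k ^ 2)) := by
    intro ℓ Y hY
    calc Real.sqrt Y
        ≤ Real.sqrt ((∑ t ∈ Finset.Ico (rr ℓ) (Rtot ℓ), σ ℓ t ^ 2)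
            * ∑ s, ∑ m1, ∑ m2, ∑ m3, B s m1 m2 m3 ^ 2) := Real.sqrt_le_sqrt hY
      _ = Real.sqrt (∑ t ∈ Finset.Ico (rr ℓ) (Rtot ℓ), σ ℓ t ^ 2)
            * Real.sqrt (∑ s, ∑ m1, ∑ m2, ∑ m3, B s m1 m2 m3 ^ 2) :=
          Real.sqrt_mul (htn ℓ) _
      _ ≤ Real.sqrt (∑ t ∈ Finset.Ico (rr ℓ) (Rtot ℓ), σ ℓ t ^ 2)
            * (Real.sqrt C * Real.sqrt (∑ i, ∑ j, ∑ k, Uhat i j k ^ 2)) :=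
          mul_le_mul_of_nonneg_left hBSle (Real.sqrt_nonneg _)
  have hA := piece 0 _ b0
  have hB := piece 1 _ b1
  have hC2 := piece 2 _ b2
  calc Real.sqrt (∑ i, ∑ j, ∑ k, (Uhat i j k - U0 i j k) ^ 2)
      ≤ Real.sqrt (∑ i, ∑ j, ∑ k, (Uhat i j k - E1 i j k) ^ 2)
        + (Real.sqrt (∑ i, ∑ j, ∑ k, (E1 i j k - E2 i j k) ^ 2)
          + Real.sqrt (∑ i, ∑ j, ∑ k, (E2 i j k - E3 i j k) ^ 2)) := tri
    _ ≤ Real.sqrt (∑ t ∈ Finset.Ico (rr 0) (Rtot 0), σ 0 t ^ 2)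
          * (Real.sqrt C * Real.sqrt (∑ i, ∑ j, ∑ k, Uhat i j k ^ 2))
        + (Real.sqrt (∑ t ∈ Finset.Ico (rr 1) (Rtot 1), σ 1 t ^ 2)
            * (Real.sqrt C * Real.sqrt (∑ i, ∑ j, ∑ k, Uhat i j k ^ 2))
          + Real.sqrt (∑ t ∈ Finset.Ico (rr 2) (Rtot 2), σ 2 t ^ 2)
            * (Real.sqrt C * Real.sqrt (∑ i, ∑ j, ∑ k, Uhat i j k ^ 2))) :=
        add_le_add hA (add_le_add hB hC2)
    _ = Real.sqrt C * Real.sqrt (∑ i, ∑ j, ∑ k, Uhat i j k ^ 2)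
        * (Real.sqrt (∑ t ∈ Finset.Ico (rr 0) (Rtot 0), σ 0 t ^ 2)
          + Real.sqrt (∑ t ∈ Finset.Ico (rr 1) (Rtot 1), σ 1 t ^ 2)
          + Real.sqrt (∑ t ∈ Finset.Ico (rr 2) (Rtot 2), σ 2 t ^ 2)) := by ring
    _ = Real.sqrt C * Real.sqrt (∑ i, ∑ j, ∑ k, Uhat i j k ^ 2)
        * ∑ ℓ : Fin 3, Real.sqrt (∑ k ∈ Finset.Ico (rr ℓ) (Rtot ℓ), σ ℓ k ^ 2) := by
        rw [Fin.sum_univ_three]
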